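/- If X ~ Binomial(n, p) and \hat{p} = X/n, then the central moments \mu_m = E[(\hat{p} - p)^m] satisfy the recursion \mu_0 = 1, \mu_1 = 0, and \mu_{m+1} = (p(1-p)/n) * (m * \mu_{m-1} + d/dp \mu_m), where \mu_m is viewed as a polynomial function of p. -/

import Mathlib

/-- `m`-th central moment of `X/n` where `X ~ Binomial(n,p)`. -/
noncomputable def binCentralMoment (n m : ℕ) (p : ℝ) : ℝ :=
  ∑ x ∈ Finset.range (n + 1),
    ((x : ℝ) / (n : ℝ) - p) ^ m * (n.choose x : ℝ) * p ^ x * (1 - p) ^ (n - x)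

lemma binCM_zero (n : ℕ) (q : ℝ) : binCentralMoment n 0 q = 1 := by
  unfold binCentralMoment
  simp only [pow_zero, one_mul]
  calc ∑ x ∈ Finset.range (n + 1), (n.choose x : ℝ) * q ^ x * (1 - q) ^ (n - x)
      = ∑ x ∈ Finset.range (n + 1), q ^ x * (1 - q) ^ (n - x) * (n.choose x : ℝ) := by
        apply Finset.sum_congr rfl; intros; ring
    _ = (q + (1 - q)) ^ n := (add_pow q (1 - q) n).symm
    _ = 1 := by norm_num

lemma term_hasDeriv (n m x : ℕ) (p : ℝ) :
    HasDerivAt (fun q : ℝ => ((x : ℝ) / (n : ℝ) - q) ^ m * (n.choose x : ℝ) * q ^ x * (1 - q) ^ (n - x))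
      ((((m : ℝ) * ((x : ℝ) / (n : ℝ) - p) ^ (m - 1) * (-1)) * (n.choose x : ℝ) * p ^ x +
          (((x : ℝ) / (n : ℝ) - p) ^ m * (n.choose x : ℝ)) * ((x : ℝ) * p ^ (x - 1))) * (1 - p) ^ (n - x) +
        (((x : ℝ) / (n : ℝ) - p) ^ m * (n.choose x : ℝ) * p ^ x) *
          (((n - x : ℕ) : ℝ) * (1 - p) ^ (n - x - 1) * (-1))) p := by
  have h1 : HasDerivAt (fun q : ℝ => ((x : ℝ) / (n : ℝ) - q)) (-1) p := by
    simpa using (hasDerivAt_id p).const_sub ((x : ℝ) / (n : ℝ))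
  have h2 : HasDerivAt (fun q : ℝ => (1 - q) ^ (n - x))
      (((n - x : ℕ) : ℝ) * (1 - p) ^ (n - x - 1) * (-1)) p := by
    have : HasDerivAt (fun q : ℝ => (1 - q)) (-1) p := by
      simpa using (hasDerivAt_id p).const_sub (1 : ℝ)
    exact this.pow (n - x)
  exact (((h1.pow m).mul_const _).mul (hasDerivAt_pow x p)).mul h2

lemma moment_hasDeriv (n m : ℕ) (p : ℝ) :
    HasDerivAt (fun q : ℝ => binCentralMoment n m q)
      (∑ x ∈ Finset.range (n + 1),
        ((((m : ℝ) * ((x : ℝ) / (n : ℝ) - p) ^ (m - 1) * (-1)) * (n.choose x : ℝ) * p ^ x +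
            (((x : ℝ) / (n : ℝ) - p) ^ m * (n.choose x : ℝ)) * ((x : ℝ) * p ^ (x - 1))) * (1 - p) ^ (n - x) +
          (((x : ℝ) / (n : ℝ) - p) ^ m * (n.choose x : ℝ) * p ^ x) *
            (((n - x : ℕ) : ℝ) * (1 - p) ^ (n - x - 1) * (-1)))) p := by
  unfold binCentralMoment
  exact HasDerivAt.fun_sum fun x _ => term_hasDeriv n m x p

lemma key (n m : ℕ) (hn : 0 < n) (p : ℝ) :
    p * (1 - p) * deriv (fun q : ℝ => binCentralMoment n m q) p =
      -(m : ℝ) * (p * (1 - p)) * binCentralMoment n (m - 1) p +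
        (n : ℝ) * binCentralMoment n (m + 1) p := by
  rw [(moment_hasDeriv n m p).deriv]
  unfold binCentralMoment
  rw [Finset.mul_sum, Finset.mul_sum, Finset.mul_sum, ← Finset.sum_add_distrib]
  apply Finset.sum_congr rfl
  intro x hx
  have hxn : x ≤ n := Nat.lt_succ_iff.mp (Finset.mem_range.mp hx)
  have hN : (n : ℝ) ≠ 0 := Nat.cast_ne_zero.mpr hn.ne'
  have hc : (n : ℝ) * ((x : ℝ) / (n : ℝ) - p) = (x : ℝ) - (n : ℝ) * p := by field_simp
  have e1 : (x : ℝ) * p ^ (x - 1) * p = (x : ℝ) * p ^ x := by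
    cases x with
    | zero => simp
    | succ a => simp [pow_succ]; ring
  have e2 : ((n : ℝ) - (x : ℝ)) * (1 - p) ^ (n - x - 1) * (1 - p) =
      ((n : ℝ) - (x : ℝ)) * (1 - p) ^ (n - x) := by
    rcases eq_or_lt_of_le hxn with h | h
    · simp [h]
    · obtain ⟨b, hb⟩ : ∃ b, n - x = b + 1 := ⟨n - x - 1, by omega⟩
      rw [hb]
      simp only [Nat.add_sub_cancel, pow_succ]
      ring
  rw [Nat.cast_sub hxn]
  linear_combination
    ((((x : ℝ) / (n : ℝ) - p) ^ m * (n.choose x : ℝ)) * (1 - p) * (1 - p) ^ (n - x)) * e1 -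
    ((((x : ℝ) / (n : ℝ) - p) ^ m * (n.choose x : ℝ)) * p * p ^ x) * e2 -
    ((((x : ℝ) / (n : ℝ) - p) ^ m * (n.choose x : ℝ)) * p ^ x * (1 - p) ^ (n - x)) * hc

lemma binCM_rec (n : ℕ) (hn : 0 < n) (p : ℝ) (m : ℕ) :
    binCentralMoment n (m + 1) p =
      p * (1 - p) / (n : ℝ) *
        ((m : ℝ) * binCentralMoment n (m - 1) p +
          deriv (fun q : ℝ => binCentralMoment n m q) p) := by
  have h := key n m hn p
  have hN : (n : ℝ) ≠ 0 := Nat.cast_ne_zero.mpr hn.ne'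
  field_simp
  linear_combination -h

/-- Renovsky formula: recursion for the central moments of the binomial
empirical frequency `p̂ = X/n`. -/
theorem binCentralMoment_recursion (n : ℕ) (hn : 0 < n) (p : ℝ)
    (hp : 0 < p) (hp1 : p < 1) :
    binCentralMoment n 0 p = 1 ∧
    binCentralMoment n 1 p = 0 ∧
    ∀ m : ℕ, 1 ≤ m →
      binCentralMoment n (m + 1) p =
        p * (1 - p) / (n : ℝ) *
          ((m : ℝ) * binCentralMoment n (m - 1) p +
            deriv (fun q : ℝ => binCentralMoment n m q) p) := by
  have hderiv0 : deriv (fun q : ℝ => binCentralMoment n 0 q) p = 0 := by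
    have : (fun q : ℝ => binCentralMoment n 0 q) = fun _ => (1 : ℝ) := funext (binCM_zero n)
    rw [this, deriv_const]
  refine ⟨binCM_zero n p, ?_, fun m _ => binCM_rec n hn p m⟩
  simpa [hderiv0] using binCM_rec n hn p 0
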